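/- arXiv:1503.09175 — 2 statements merged into one kernel-verified Lean document; each statement's English description precedes it below -/
import Mathlib

section
/- Suppose the hypercube Q(n) (n ≥ 2k+1) contains a cycle C visiting all C(n,k) vertices in level k and staying within levels k and k+1, and a family of C(n,k) vertex-disjoint monotone paths each starting at a vertex of C in level k+1 and ending in level n-k. Write C = (x_1, x_2, ..., x_{2N}) with N = C(n,k), where the odd-indexed vertices lie in level k and the even-indexed ones in level k+1, and let y_{2i} be the endpoint in level n-k of the path starting at x_{2i}. Then the cyclic sequence (x_1, y_2, x_3, y_4, ..., x_{2N-1}, y_{2N}), interpreting bitstrings as characteristic vectors of subsets of [n], is a Hamilton cycle in the bipartite Kneser graph H(n,k). -/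
open SimpleGraph

/-- The bipartite Kneser graph `H(n,k)`: vertices are the `k`-element and
`(n-k)`-element subsets of `[n]`, with an edge when one is a (proper) subset of the other. -/
def bipKneser (n k : ℕ) : SimpleGraph {s : Finset (Fin n) // s.card = k ∨ s.card = n - k} where
  Adj s t := s.1 ⊂ t.1 ∨ t.1 ⊂ s.1
  symm := by constructor; intro s t h; tauto
  loopless := by constructor; intro s h; rcases h with h | h <;> exact ssubset_irrefl _ h

/-- The Kneser graph `K(n,k)`: vertices are the `k`-element subsets of `[n]`,
with an edge between any two disjoint sets. -/
def kneser (n k : ℕ) : SimpleGraph {s : Finset (Fin n) // s.card = k} where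
  Adj s t := s ≠ t ∧ Disjoint s.1 t.1
  symm := by constructor; intro s t h; exact ⟨h.1.symm, h.2.symm⟩
  loopless := by constructor; intro s h; exact h.1 rfl

/-- The hypercube `Q(n)`: vertices are bitstrings of length `n`, with an edge
between two bitstrings differing in exactly one bit. -/
def hypercube (n : ℕ) : SimpleGraph (Fin n → Bool) where
  Adj x y := hammingDist x y = 1
  symm := by constructor; intro x y h; rwa [hammingDist_comm]
  loopless := by constructor; intro x h; simp [hammingDist_self] at h

/-- The level of a bitstring: its number of `1`-entries. -/
def level {n : ℕ} (x : Fin n → Bool) : ℕ := (Finset.univ.filter (fun i => x i = true)).card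

/-- The subset of `[n]` whose characteristic vector is the bitstring `x`. -/
def toSet {n : ℕ} (x : Fin n → Bool) : Finset (Fin n) := Finset.univ.filter (fun i => x i = true)

section Aux

variable {n : ℕ}

lemma level_eq_card (x : Fin n → Bool) : level x = (toSet x).card := rfl

lemma mem_toSet {x : Fin n → Bool} {i : Fin n} : i ∈ toSet x ↔ x i = true := by
  simp [toSet]

lemma toSet_injective : Function.Injective (toSet (n := n)) := by
  intro u v h
  funext i
  have := Finset.ext_iff.mp h i
  simp only [mem_toSet] at this
  cases hu : u i <;> cases hv : v i <;> simp_all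

lemma step_lemma {a c : Fin n → Bool} (h : (hypercube n).Adj a c) :
    (toSet a ⊆ toSet c ∧ level c = level a + 1) ∨
    (toSet c ⊆ toSet a ∧ level a = level c + 1) := by
  have h1 : (Finset.univ.filter fun i => a i ≠ c i).card = 1 := h
  obtain ⟨i, hi⟩ := Finset.card_eq_one.mp h1
  have hine : a i ≠ c i := by
    have : i ∈ Finset.univ.filter fun j => a j ≠ c j := hi ▸ Finset.mem_singleton_self i
    simpa using this
  have heq : ∀ j, j ≠ i → a j = c j := by
    intro j hj
    by_contra hne
    have : j ∈ Finset.univ.filter fun j => a j ≠ c j := by simpa using hne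
    rw [hi, Finset.mem_singleton] at this
    exact hj this
  cases ha : a i
  · have hc : c i = true := by
      cases hc : c i
      · exact absurd (ha.trans hc.symm) hine
      · rfl
    left
    have hts : toSet c = insert i (toSet a) := by
      ext j
      by_cases hj : j = i
      · subst hj; simp [mem_toSet, hc]
      · simp [mem_toSet, Finset.mem_insert, hj, heq j hj]
    constructor
    · rw [hts]; exact Finset.subset_insert _ _
    · rw [level_eq_card, level_eq_card, hts, Finset.card_insert_of_notMem]
      simp [mem_toSet, ha]
  · have hc : c i = false := by
      cases hc : c i
      · rfl
      · exact absurd (ha.trans hc.symm) hine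
    right
    have hts : toSet a = insert i (toSet c) := by
      ext j
      by_cases hj : j = i
      · subst hj; simp [mem_toSet, ha]
      · simp [mem_toSet, Finset.mem_insert, hj, heq j hj]
    constructor
    · rw [hts]; exact Finset.subset_insert _ _
    · rw [level_eq_card, level_eq_card, hts, Finset.card_insert_of_notMem]
      simp [mem_toSet, hc]

lemma hyper_ivt : ∀ {a b : Fin n → Bool} (q : (hypercube n).Walk a b) (m : ℕ),
    level a < m → m ≤ level b → ∃ v ∈ q.support, level v = m := by
  intro a b q
  induction q with
  | nil => intro m h1 h2; omega
  | @cons a c b h q ih =>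
    intro m h1 h2
    rcases step_lemma h with ⟨_, hl⟩ | ⟨_, hl⟩
    · by_cases hcm : level c = m
      · exact ⟨c, by simp, hcm⟩
      · obtain ⟨v, hv, hvm⟩ := ih m (by omega) h2
        exact ⟨v, by simp [hv], hvm⟩
    · obtain ⟨v, hv, hvm⟩ := ih m (by omega) h2
      exact ⟨v, by simp [hv], hvm⟩

lemma hyper_chain : ∀ {a b : Fin n → Bool} (q : (hypercube n).Walk a b),
    q.IsPath →
    (∀ w₁ ∈ q.support, ∀ w₂ ∈ q.support, level w₁ = level w₂ → w₁ = w₂) →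
    level a ≤ level b → toSet a ⊆ toSet b := by
  intro a b q
  induction q with
  | nil => intro _ _ _; exact subset_rfl
  | @cons a c b h q ih =>
    intro hp hm hle
    have hanin : a ∉ q.support := by
      have := hp.support_nodup
      rw [SimpleGraph.Walk.support_cons] at this
      exact (List.nodup_cons.mp this).1
    rcases step_lemma h with ⟨hsub, hl⟩ | ⟨hsub, hl⟩
    · have hcb : level c ≤ level b := by
        by_contra hcb
        have hab : level a = level b := by omega
        have heab : a = b := hm a (by simp) b (by simp [SimpleGraph.Walk.end_mem_support]) hab
        exact hanin (by rw [heab]; exact q.end_mem_support)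
      exact hsub.trans (ih hp.of_cons
        (fun w₁ h1 w₂ h2 => hm w₁ (by simp [h1]) w₂ (by simp [h2])) hcb)
    · obtain ⟨v, hv, hvm⟩ := hyper_ivt q (level a) (by omega) hle
      have hva : v = a := hm v (by simp [hv]) a (by simp) hvm
      exact absurd (hva ▸ hv) hanin

end Aux

/-- Given a cycle `(x_1, x'_1, x_2, x'_2, …, x_N, x'_N)` in `Q(n)` within levels `k` and
`k+1` visiting all `N = C(n,k)` vertices in level `k`, and `N` vertex-disjoint monotone
paths, the path starting at `x'_i` ending at the level-`(n-k)` vertex `y_i`, the cyclic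
sequence `(x_1, y_1, x_2, y_2, …, x_N, y_N)`, with bitstrings read as characteristic
vectors of subsets of `[n]`, is a Hamilton cycle in the bipartite Kneser graph `H(n,k)`. -/
theorem stmt_11 (n k : ℕ) (hk : 1 ≤ k) (hn : 2 * k + 1 ≤ n)
    (N : ℕ) (hN : N = n.choose k)
    (x x' : ZMod N → (Fin n → Bool))
    (hadj : ∀ i, (hypercube n).Adj (x i) (x' i) ∧ (hypercube n).Adj (x' i) (x (i + 1)))
    (hlevx : ∀ i, level (x i) = k) (hlevx' : ∀ i, level (x' i) = k + 1)
    (hxinj : Function.Injective x) (hx'inj : Function.Injective x')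
    (hxall : ∀ v : Fin n → Bool, level v = k → ∃ i, x i = v)
    (y : ZMod N → (Fin n → Bool)) (hlevy : ∀ i, level (y i) = n - k)
    (p : ∀ i, (hypercube n).Walk (x' i) (y i))
    (hpath : ∀ i, (p i).IsPath)
    (hmono : ∀ i, ∀ w₁ ∈ (p i).support, ∀ w₂ ∈ (p i).support, level w₁ = level w₂ → w₁ = w₂)
    (hdisj : ∀ i j, i ≠ j → ∀ v, v ∈ (p i).support → v ∉ (p j).support) :
    ∃ w : ZMod (2 * N) → {s : Finset (Fin n) // s.card = k ∨ s.card = n - k},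
      Function.Bijective w ∧
      (∀ i, (bipKneser n k).Adj (w i) (w (i + 1))) ∧
      (∀ i : ZMod N, (w (2 * i.val) : Finset (Fin n)) = toSet (x i) ∧
        (w (2 * i.val + 1) : Finset (Fin n)) = toSet (y i)) := by
  have hNpos : 0 < N := by rw [hN]; exact Nat.choose_pos (by omega)
  haveI : NeZero N := ⟨hNpos.ne'⟩
  haveI : NeZero (2 * N) := ⟨by omega⟩
  have hcx : ∀ i, (toSet (x i)).card = k := fun i => ((level_eq_card _).symm.trans (hlevx i))
  have hcy : ∀ i, (toSet (y i)).card = n - k := fun i => ((level_eq_card _).symm.trans (hlevy i))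
  have hx'y : ∀ i, toSet (x' i) ⊆ toSet (y i) := fun i =>
    hyper_chain (p i) (hpath i) (hmono i) (by rw [hlevx', hlevy]; omega)
  have hxx' : ∀ i, toSet (x i) ⊆ toSet (x' i) := by
    intro i
    rcases step_lemma (hadj i).1 with ⟨hs, _⟩ | ⟨_, hl⟩
    · exact hs
    · rw [hlevx, hlevx'] at hl; omega
  have hx1x' : ∀ i, toSet (x (i + 1)) ⊆ toSet (x' i) := by
    intro i
    rcases step_lemma (hadj i).2 with ⟨_, hl⟩ | ⟨hs, _⟩
    · rw [hlevx, hlevx'] at hl; omega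
    · exact hs
  have hA : ∀ i, toSet (x i) ⊂ toSet (y i) := by
    intro i
    refine ssubset_of_subset_of_ne ((hxx' i).trans (hx'y i)) ?_
    intro h
    have := hcx i
    rw [h, hcy i] at this
    omega
  have hB : ∀ i, toSet (x (i + 1)) ⊂ toSet (y i) := by
    intro i
    refine ssubset_of_subset_of_ne ((hx1x' i).trans (hx'y i)) ?_
    intro h
    have := hcx (i + 1)
    rw [h, hcy i] at this
    omega
  have hyinj : Function.Injective y := by
    intro i j hij
    by_contra hne
    exact hdisj i j hne (y i) (p i).end_mem_support (by rw [hij]; exact (p j).end_mem_support)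
  refine ⟨fun j => if j.val % 2 = 0
      then ⟨toSet (x ((j.val / 2 : ℕ) : ZMod N)), Or.inl (hcx _)⟩
      else ⟨toSet (y ((j.val / 2 : ℕ) : ZMod N)), Or.inr (hcy _)⟩, ?_, ?_, ?_⟩
  · -- bijectivity
    refine (Fintype.bijective_iff_injective_and_card _).mpr ⟨?_, ?_⟩
    · intro j1 j2 hj
      have hv1 : j1.val < 2 * N := j1.val_lt
      have hv2 : j2.val < 2 * N := j2.val_lt
      have hd1 : j1.val / 2 < N := by omega
      have hd2 : j2.val / 2 < N := by omega
      have hdiv : j1.val % 2 = j2.val % 2 ∧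
          ((j1.val / 2 : ℕ) : ZMod N) = ((j2.val / 2 : ℕ) : ZMod N) := by
        by_cases h1 : j1.val % 2 = 0 <;> by_cases h2 : j2.val % 2 = 0 <;>
          simp only [h1, h2, Subtype.mk.injEq, reduceIte] at hj
        · exact ⟨by omega, hxinj (toSet_injective hj)⟩
        · exfalso
          have hc1 := hcx (((j1.val / 2 : ℕ) : ZMod N))
          have hc2 := hcy (((j2.val / 2 : ℕ) : ZMod N))
          rw [hj, hc2] at hc1
          omega
        · exfalso
          have hc1 := hcy (((j1.val / 2 : ℕ) : ZMod N))
          have hc2 := hcx (((j2.val / 2 : ℕ) : ZMod N))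
          rw [hj, hc2] at hc1
          omega
        · exact ⟨by omega, hyinj (toSet_injective hj)⟩
      have hdv : j1.val / 2 = j2.val / 2 := by
        have := congrArg ZMod.val hdiv.2
        rwa [ZMod.val_natCast_of_lt hd1, ZMod.val_natCast_of_lt hd2] at this
      exact ZMod.val_injective _ (by omega)
    · rw [ZMod.card, Fintype.card_subtype]
      have hfo : (Finset.univ.filter
            fun s : Finset (Fin n) => s.card = k ∨ s.card = n - k)
          = (Finset.univ.filter fun s : Finset (Fin n) => s.card = k) ∪
            (Finset.univ.filter fun s : Finset (Fin n) => s.card = n - k) := by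
        ext s; simp [Finset.mem_filter, Finset.mem_union]
      rw [hfo, Finset.card_union_of_disjoint]
      · have e1 : (Finset.univ.filter fun s : Finset (Fin n) => s.card = k).card
            = Fintype.card {s : Finset (Fin n) // s.card = k} :=
          (Fintype.card_subtype _).symm
        have e2 : (Finset.univ.filter fun s : Finset (Fin n) => s.card = n - k).card
            = Fintype.card {s : Finset (Fin n) // s.card = n - k} :=
          (Fintype.card_subtype _).symm
        rw [e1, e2, Fintype.card_finset_len, Fintype.card_finset_len, Fintype.card_fin,
          Nat.choose_symm (by omega : k ≤ n)]
        omega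
      · rw [Finset.disjoint_left]
        intro s hs1 hs2
        simp only [Finset.mem_filter] at hs1 hs2
        omega
  · -- adjacency
    have hAdj : ∀ s t : {s : Finset (Fin n) // s.card = k ∨ s.card = n - k},
        ((s : Finset (Fin n)) ⊂ t ∨ (t : Finset (Fin n)) ⊂ s) → (bipKneser n k).Adj s t :=
      fun s t h => h
    intro i
    have hv : i.val < 2 * N := i.val_lt
    have hone : (1 : ZMod (2 * N)).val = 1 := by
      rw [ZMod.val_one_eq_one_mod]; exact Nat.mod_eq_of_lt (by omega)
    have hadd : (i + 1).val = (i.val + 1) % (2 * N) := by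
      rw [ZMod.val_add, hone]
    by_cases hpar : i.val % 2 = 0
    · have hlt : i.val + 1 < 2 * N := by omega
      have h2 : (i + 1).val = i.val + 1 := by rw [hadd, Nat.mod_eq_of_lt hlt]
      have h2p : (i + 1).val % 2 ≠ 0 := by omega
      have h2d : (i + 1).val / 2 = i.val / 2 := by omega
      apply hAdj
      simp only [hpar, h2p, reduceIte, h2d]
      exact Or.inl (hA _)
    · have h2p : (i + 1).val % 2 = 0 := by
        rw [hadd]
        rcases Nat.lt_or_ge (i.val + 1) (2 * N) with h | h
        · rw [Nat.mod_eq_of_lt h]; omega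
        · have : i.val + 1 = 2 * N := by omega
          rw [this]; simp
      have hidx : (((i + 1).val / 2 : ℕ) : ZMod N) = ((i.val / 2 : ℕ) : ZMod N) + 1 := by
        rcases Nat.lt_or_ge (i.val + 1) (2 * N) with h | h
        · have h2 : (i + 1).val = i.val + 1 := by rw [hadd, Nat.mod_eq_of_lt h]
          have : (i + 1).val / 2 = i.val / 2 + 1 := by omega
          rw [this]; push_cast; ring
        · have he : i.val + 1 = 2 * N := by omega
          have h2 : (i + 1).val = 0 := by rw [hadd, he]; simp
          have hd : i.val / 2 = N - 1 := by omega
          rw [h2, hd]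
          have : ((N - 1 : ℕ) : ZMod N) + 1 = ((N - 1 + 1 : ℕ) : ZMod N) := by push_cast; ring
          rw [this, (by omega : N - 1 + 1 = N)]
          simp
      apply hAdj
      simp only [hpar, h2p, reduceIte, hidx]
      exact Or.inr (hB _)
  · -- spec
    intro i
    have hvl : i.val < N := i.val_lt
    have h1 : ((2 * i.val : ZMod (2 * N))).val = 2 * i.val := by
      have : ((2 * i.val : ℕ) : ZMod (2 * N)) = (2 * i.val : ZMod (2 * N)) := by push_cast; ring
      rw [← this, ZMod.val_natCast_of_lt (by omega)]
    have h2 : ((2 * i.val + 1 : ZMod (2 * N))).val = 2 * i.val + 1 := by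
      have : ((2 * i.val + 1 : ℕ) : ZMod (2 * N)) = (2 * i.val + 1 : ZMod (2 * N)) := by
        push_cast; ring
      rw [← this, ZMod.val_natCast_of_lt (by omega)]
    have hcast : ((i.val : ℕ) : ZMod N) = i := ZMod.natCast_rightInverse i
    constructor
    · simp only [h1, Nat.mul_mod_right, if_pos, Nat.mul_div_cancel_left _ (by omega : 0 < 2),
        hcast]
    · have hm : (2 * i.val + 1) % 2 = 1 := by omega
      have hd : (2 * i.val + 1) / 2 = i.val := by omega
      simp only [h2, hm, if_neg, reduceIte, hd, hcast]
      norm_num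
end

section
/- For n ≥ 4, the n monotone paths σ^ℓ(A(n,1)), ℓ = 0, 1, ..., n-1, where A(n,1) = (a(n,2), a(n,3), ..., a(n,n-1)) and σ^ℓ is cyclic left shift by ℓ, are pairwise vertex-disjoint paths in the hypercube Q(n): every vertex visited by any of these paths has its 1-entries appearing consecutively when the bitstring is viewed cyclically, and distinct shifts ℓ produce disjoint vertex sets. -/
open SimpleGraph

/-- `a(n,k)`: the bitstring of length `n` with `1`s exactly in the last `k` positions. -/
def abit (n k : ℕ) : Fin n → Bool := fun i => decide (n - k ≤ i.val)

/-- `b(n,k) = a(n-1,k)∘0`: the bitstring of length `n` with `1`s exactly in positions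
`n-1-k, …, n-2`. -/
def bbit (n k : ℕ) : Fin n → Bool := fun i => decide (n - 1 - k ≤ i.val ∧ i.val < n - 1)

/-- `σ^ℓ`: cyclic left shift of a bitstring by `ℓ` positions. -/
def cycShift (n ℓ : ℕ) (x : Fin n → Bool) : Fin n → Bool :=
  fun i => x ⟨(i.val + ℓ) % n, Nat.mod_lt _ (Nat.lt_of_le_of_lt (Nat.zero_le _) i.isLt)⟩

lemma mod_cancel {n : ℕ} (hn : 0 < n) {ℓ i i' : ℕ} (hi : i < n) (hi' : i' < n)
    (h : (i + ℓ) % n = (i' + ℓ) % n) : i = i' := by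
  have h2 : i % n = i' % n := Nat.ModEq.add_right_cancel' ℓ h
  rwa [Nat.mod_eq_of_lt hi, Nat.mod_eq_of_lt hi'] at h2

def sfun (n ℓ j : ℕ) : ℕ := (n - j + (n - ℓ % n)) % n

lemma sfun_lt (n ℓ j : ℕ) (hn : 0 < n) : sfun n ℓ j < n := Nat.mod_lt _ hn

lemma sfun_spec (n ℓ j : ℕ) (hn : 0 < n) (t : ℕ) :
    (sfun n ℓ j + t + ℓ) % n = (n - j + t) % n := by
  unfold sfun
  have hd : n * (ℓ / n) + ℓ % n = ℓ := Nat.div_add_mod ℓ n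
  have hm : ℓ % n < n := Nat.mod_lt _ hn
  rw [add_assoc, Nat.mod_add_mod]
  have e : n - j + (n - ℓ % n) + (t + ℓ) = n - j + t + (n * (ℓ / n) + n) := by
    generalize n * (ℓ / n) = p at hd ⊢
    omega
  rw [e, ← Nat.add_assoc, Nat.add_mod_right, Nat.add_mul_mod_self_left]

lemma char (n ℓ j : ℕ) (hn : 0 < n) (hj : j ≤ n) (i : Fin n) :
    cycShift n ℓ (abit n j) i = true ↔ ∃ t < j, i.val = (sfun n ℓ j + t) % n := by
  simp only [cycShift, abit, decide_eq_true_eq]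
  have hv : (i.val + ℓ) % n < n := Nat.mod_lt _ hn
  constructor
  · intro h
    set v := (i.val + ℓ) % n with hvdef
    refine ⟨v - (n - j), by omega, ?_⟩
    have key : ((sfun n ℓ j + (v - (n - j))) % n + ℓ) % n = (i.val + ℓ) % n := by
      rw [Nat.mod_add_mod, sfun_spec n ℓ j hn]
      have : n - j + (v - (n - j)) = v := by omega
      rw [this, ← hvdef, Nat.mod_eq_of_lt hv]
    exact (mod_cancel hn (Nat.mod_lt _ hn) i.isLt key).symm
  · rintro ⟨t, ht, hi⟩
    rw [hi]
    have : ((sfun n ℓ j + t) % n + ℓ) % n = (n - j + t) % n := by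
      rw [Nat.mod_add_mod, sfun_spec n ℓ j hn]
    rw [this, Nat.mod_eq_of_lt (by omega)]
    omega

lemma level_shift (n ℓ j : ℕ) (hn : 0 < n) (hj : j ≤ n) :
    level (cycShift n ℓ (abit n j)) = j := by
  have himg : (Finset.univ.filter (fun i => cycShift n ℓ (abit n j) i = true)) =
      (Finset.range j).image (fun t => (⟨(sfun n ℓ j + t) % n, Nat.mod_lt _ hn⟩ : Fin n)) := by
    ext i
    simp only [Finset.mem_filter, Finset.mem_univ, true_and, Finset.mem_image, Finset.mem_range]
    rw [char n ℓ j hn hj i]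
    constructor
    · rintro ⟨t, ht, hi⟩; exact ⟨t, ht, by ext; simp [hi]⟩
    · rintro ⟨t, ht, hi⟩; exact ⟨t, ht, by rw [← hi]⟩
  have hinj : ∀ t₁ ∈ Finset.range j, ∀ t₂ ∈ Finset.range j,
      (⟨(sfun n ℓ j + t₁) % n, Nat.mod_lt _ hn⟩ : Fin n) =
      (⟨(sfun n ℓ j + t₂) % n, Nat.mod_lt _ hn⟩ : Fin n) → t₁ = t₂ := by
    intro t₁ h₁ t₂ h₂ h
    simp only [Finset.mem_range] at h₁ h₂
    have hval : (sfun n ℓ j + t₁) % n = (sfun n ℓ j + t₂) % n := congrArg Fin.val h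
    have h' : ((sfun n ℓ j + t₁) % n + ℓ) % n = ((sfun n ℓ j + t₂) % n + ℓ) % n := by rw [hval]
    rw [Nat.mod_add_mod, Nat.mod_add_mod, sfun_spec n ℓ j hn, sfun_spec n ℓ j hn,
      Nat.mod_eq_of_lt (by omega), Nat.mod_eq_of_lt (by omega)] at h'
    omega
  rw [level, himg, Finset.card_image_of_injOn hinj, Finset.card_range]

/-- For `n ≥ 4`, the `n` monotone paths `σ^ℓ(A(n,1))`, `ℓ = 0,…,n-1`, where
`A(n,1) = (a(n,2), …, a(n,n-1))`, are pairwise vertex-disjoint paths in `Q(n)`: each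
consecutive pair along a shifted path is adjacent, every visited vertex has level equal to
its position `j` (so each path is monotone) and its `1`-entries cyclically consecutive,
and distinct shifts produce disjoint vertex sets. -/
theorem stmt_17 (n : ℕ) (hn : 4 ≤ n) :
    (∀ ℓ j, 2 ≤ j → j ≤ n - 2 →
      (hypercube n).Adj (cycShift n ℓ (abit n j)) (cycShift n ℓ (abit n (j + 1)))) ∧
    (∀ ℓ j, 2 ≤ j → j ≤ n - 1 → level (cycShift n ℓ (abit n j)) = j) ∧
    (∀ ℓ j, 2 ≤ j → j ≤ n - 1 → ∃ s, ∀ i : Fin n,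
      (cycShift n ℓ (abit n j) i = true ↔ ∃ t < j, i.val = (s + t) % n)) ∧
    (∀ ℓ₁ ℓ₂, ℓ₁ < n → ℓ₂ < n → ℓ₁ ≠ ℓ₂ → ∀ j₁ j₂, 2 ≤ j₁ → j₁ ≤ n - 1 → 2 ≤ j₂ →
      j₂ ≤ n - 1 → cycShift n ℓ₁ (abit n j₁) ≠ cycShift n ℓ₂ (abit n j₂)) := by
  have hn0 : 0 < n := by omega
  refine ⟨?_, ?_, ?_, ?_⟩
  · -- adjacency
    intro ℓ j h2 hj
    show hammingDist _ _ = 1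
    have hs : sfun n ℓ (j + 1) < n := sfun_lt n ℓ (j + 1) hn0
    set i₀ : Fin n := ⟨sfun n ℓ (j + 1), hs⟩ with hi₀
    have hfil : (Finset.univ.filter
        (fun i => cycShift n ℓ (abit n j) i ≠ cycShift n ℓ (abit n (j + 1)) i)) = {i₀} := by
      ext i
      simp only [Finset.mem_filter, Finset.mem_univ, true_and, Finset.mem_singleton,
        cycShift, abit, ne_eq, decide_eq_decide]
      have hv : (i.val + ℓ) % n < n := Nat.mod_lt _ hn0
      have hi0v : (i₀.val + ℓ) % n = n - (j + 1) := by
        have := sfun_spec n ℓ (j + 1) hn0 0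
        simp only [Nat.add_zero] at this
        rw [hi₀]
        rw [this, Nat.mod_eq_of_lt (by omega)]
      have key : (i.val + ℓ) % n = n - (j + 1) ↔ i = i₀ := by
        constructor
        · intro h
          exact Fin.ext (mod_cancel hn0 i.isLt i₀.isLt (by rw [h, hi0v]))
        · intro h; rw [h, hi0v]
      rw [← key]
      omega
    rw [hammingDist, hfil, Finset.card_singleton]
  · -- levels
    intro ℓ j h2 hj
    exact level_shift n ℓ j hn0 (by omega)
  · -- cyclically consecutive
    intro ℓ j h2 hj
    exact ⟨sfun n ℓ j, fun i => char n ℓ j hn0 (by omega) i⟩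
  · -- disjointness
    intro ℓ₁ ℓ₂ hl1 hl2 hne j₁ j₂ ha hb hc hd heq
    have hj : j₁ = j₂ := by
      rw [← level_shift n ℓ₁ j₁ hn0 (by omega), ← level_shift n ℓ₂ j₂ hn0 (by omega), heq]
    subst hj
    set j := j₁ with hjdef
    have hs₁ : sfun n ℓ₁ j < n := sfun_lt n ℓ₁ j hn0
    have hsl1 : (sfun n ℓ₁ j + ℓ₁) % n = n - j := by
      have := sfun_spec n ℓ₁ j hn0 0
      simp only [Nat.add_zero] at this
      rw [this, Nat.mod_eq_of_lt (by omega)]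
    -- evaluate at s₁
    have e1 := congrFun heq ⟨sfun n ℓ₁ j, hs₁⟩
    simp only [cycShift, abit, decide_eq_decide] at e1
    have hv1 : n - j ≤ (sfun n ℓ₁ j + ℓ₂) % n := by
      rw [← e1, hsl1]
    -- evaluate at s₁ + (n-1)
    have hw : (sfun n ℓ₁ j + (n - 1)) % n < n := Nat.mod_lt _ hn0
    have e2 := congrFun heq ⟨(sfun n ℓ₁ j + (n - 1)) % n, hw⟩
    simp only [cycShift, abit, decide_eq_decide] at e2
    have hwl1 : ((sfun n ℓ₁ j + (n - 1)) % n + ℓ₁) % n = n - j - 1 := by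
      rw [Nat.mod_add_mod]
      have : sfun n ℓ₁ j + (n - 1) + ℓ₁ = sfun n ℓ₁ j + ℓ₁ + (n - 1) := by omega
      rw [this, ← Nat.mod_add_mod, hsl1]
      have : n - j + (n - 1) = (n - j - 1) + n := by omega
      rw [this, Nat.add_mod_right, Nat.mod_eq_of_lt (by omega)]
    have hvlt : (sfun n ℓ₁ j + ℓ₂) % n < n := Nat.mod_lt _ hn0
    have hwl2 : ((sfun n ℓ₁ j + (n - 1)) % n + ℓ₂) % n = (sfun n ℓ₁ j + ℓ₂) % n - 1 := by
      rw [Nat.mod_add_mod]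
      have : sfun n ℓ₁ j + (n - 1) + ℓ₂ = sfun n ℓ₁ j + ℓ₂ + (n - 1) := by omega
      rw [this, ← Nat.mod_add_mod]
      have h1 : (sfun n ℓ₁ j + ℓ₂) % n + (n - 1) = ((sfun n ℓ₁ j + ℓ₂) % n - 1) + n := by omega
      rw [h1, Nat.add_mod_right, Nat.mod_eq_of_lt (by omega)]
    have hfalse : ¬ (n - j ≤ n - j - 1) := by omega
    rw [hwl1, hwl2] at e2
    have hv2 : (sfun n ℓ₁ j + ℓ₂) % n = n - j := by omega
    have : (ℓ₁ + sfun n ℓ₁ j) % n = (ℓ₂ + sfun n ℓ₁ j) % n := by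
      rw [Nat.add_comm ℓ₁, Nat.add_comm ℓ₂, hsl1, hv2]
    exact hne (mod_cancel hn0 hl1 hl2 this)
end
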